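/- If ℋ ⊆ 𝒞 is a distant family, then ℋ is CDW-independent; moreover, if U ∈ ℋ, then ℋ is admissible. -/

import Mathlib

open Finset

variable {U : Type*}

/-- `K` covers `S` in the poset `(𝒦, ⊆)`. -/
def Covers (𝒦 : Finset (Finset U)) (S K : Finset U) : Prop :=
  S ⊂ K ∧ ∀ K' ∈ 𝒦, S ⊂ K' → ¬K' ⊂ K

/-- `min h(K) < min h(S)` (for nonempty finite `S`, `K`). -/
def MinLt (h : U → ℝ) (K S : Finset U) : Prop :=
  ∃ k ∈ K, ∀ s ∈ S, h k < h s

/-- `S` is a pre-island with respect to `(𝒞, 𝒦, h)`. -/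
def IsPreIsland (𝒞 𝒦 : Finset (Finset U)) (h : U → ℝ) (S : Finset U) : Prop :=
  S ∈ 𝒞 ∧ S.Nonempty ∧ ∀ K ∈ 𝒦, Covers 𝒦 S K → MinLt h K S

/-- `S` is an island with respect to `(𝒞, 𝒦, h)`. -/
def IsIsland [DecidableEq U] (𝒞 𝒦 : Finset (Finset U)) (h : U → ℝ) (S : Finset U) : Prop :=
  S ∈ 𝒞 ∧ S.Nonempty ∧ ∀ K ∈ 𝒦, Covers 𝒦 S K → ∀ u ∈ K \ S, ∀ s ∈ S, h u < h s

/-- `(𝒞, 𝒦)` is an island domain on `U`. -/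
def IslandDomain [Fintype U] (𝒞 𝒦 : Finset (Finset U)) : Prop :=
  𝒞 ⊆ 𝒦 ∧ Finset.univ ∈ 𝒞

/-- `ℋ` is admissible with respect to `(𝒞, 𝒦)`. -/
def Admissible [DecidableEq U] [Fintype U] (𝒞 𝒦 ℋ : Finset (Finset U)) : Prop :=
  ℋ ⊆ 𝒞 ∧ (∅ : Finset U) ∉ ℋ ∧ Finset.univ ∈ ℋ ∧
    ∀ 𝒜 ⊆ ℋ, 𝒜.Nonempty → (∀ A ∈ 𝒜, ∀ B ∈ 𝒜, A ⊆ B → A = B) →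
      ∃ H ∈ 𝒜, ∀ K ∈ 𝒦, H ⊂ K → ¬K ⊆ 𝒜.sup id

/-- `𝒮` is the system of pre-islands corresponding to `(𝒞, 𝒦, h)` for some `h`. -/
def IsSystemOfPreIslands (𝒞 𝒦 𝒮 : Finset (Finset U)) : Prop :=
  ∃ h : U → ℝ, ∀ S, S ∈ 𝒮 ↔ IsPreIsland 𝒞 𝒦 h S

/-- `𝒮` is the system of islands corresponding to `(𝒞, 𝒦, h)` for some `h`. -/
def IsSystemOfIslands [DecidableEq U] (𝒞 𝒦 𝒮 : Finset (Finset U)) : Prop :=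
  ∃ h : U → ℝ, ∀ S, S ∈ 𝒮 ↔ IsIsland 𝒞 𝒦 h S

/-- `(𝒞, 𝒦)` is a connective island domain. -/
def Connective [DecidableEq U] (𝒞 𝒦 : Finset (Finset U)) : Prop :=
  ∀ A ∈ 𝒞, ∀ B ∈ 𝒞, (A ∩ B).Nonempty → ¬B ⊆ A → ∃ K ∈ 𝒦, A ⊂ K ∧ K ⊆ A ∪ B

/-- Any two members are comparable or disjoint. -/
def CDIndependent [DecidableEq U] (ℋ : Finset (Finset U)) : Prop :=
  ∀ A ∈ ℋ, ∀ B ∈ ℋ, A ⊆ B ∨ B ⊆ A ∨ A ∩ B = ∅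

def WeaklyIndependent [DecidableEq U] (ℋ : Finset (Finset U)) : Prop :=
  ∀ H ∈ ℋ, ∀ 𝒢 ⊆ ℋ, 𝒢.Nonempty → H ⊆ 𝒢.sup id → ∃ G ∈ 𝒢, H ⊆ G

def CDWIndependent [DecidableEq U] (ℋ : Finset (Finset U)) : Prop :=
  CDIndependent ℋ ∧ WeaklyIndependent ℋ

/-- The proximity relation `δ`: `A δ B` iff some `K ∈ 𝒦` with `A ⪯ K` meets `B`. -/
def Delta [DecidableEq U] (𝒦 : Finset (Finset U)) (A B : Finset U) : Prop :=
  ∃ K ∈ 𝒦, (K = A ∨ Covers 𝒦 A K) ∧ (K ∩ B).Nonempty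

def Distant [DecidableEq U] (𝒦 : Finset (Finset U)) (A B : Finset U) : Prop :=
  ¬Delta 𝒦 A B ∧ ¬Delta 𝒦 B A

/-- Any two incomparable members of `ℋ` are distant. -/
def DistantFamily [DecidableEq U] (𝒦 ℋ : Finset (Finset U)) : Prop :=
  ∀ A ∈ ℋ, ∀ B ∈ ℋ, ¬A ⊆ B → ¬B ⊆ A → Distant 𝒦 A B

/-- A proximity domain: connective and `δ` symmetric on nonempty members of `𝒞`. -/
def ProximityDomain [DecidableEq U] (𝒞 𝒦 : Finset (Finset U)) : Prop :=
  Connective 𝒞 𝒦 ∧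
    ∀ A ∈ 𝒞, ∀ B ∈ 𝒞, A.Nonempty → B.Nonempty → (Delta 𝒦 A B ↔ Delta 𝒦 B A)

lemma cover_exists_aux [DecidableEq U] (𝒦 : Finset (Finset U)) (G S K₀ : Finset U)
    (h₀ : K₀ ∈ 𝒦) (h₁ : G ⊂ K₀) (h₂ : K₀ ⊆ S) :
    ∃ K ∈ 𝒦, Covers 𝒦 G K ∧ K ⊆ S := by
  classical
  obtain ⟨K, hKmem, hmin⟩ : ∃ K ∈ 𝒦.filter fun K => G ⊂ K ∧ K ⊆ S,
      ∀ x ∈ 𝒦.filter fun K => G ⊂ K ∧ K ⊆ S, ¬x < K := by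
    obtain ⟨K, hK⟩ := Finset.exists_minimal
      (s := 𝒦.filter fun K => G ⊂ K ∧ K ⊆ S) ⟨K₀, by simp [h₀, h₁, h₂]⟩
    exact ⟨K, hK.1, fun x hx hlt => hlt.not_ge (hK.2 hx hlt.le)⟩
  simp only [Finset.mem_filter] at hKmem
  refine ⟨K, hKmem.1, ⟨hKmem.2.1, fun K' hK' hGK' hK'K => ?_⟩, hKmem.2.2⟩
  exact hmin K' (Finset.mem_filter.2 ⟨hK', hGK', hK'K.subset.trans hKmem.2.2⟩) hK'K

/-- a distant family is CDW-independent, and admissible if it contains `U`. -/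
theorem distant_cdw_and_admissible [Fintype U] [DecidableEq U] [Nonempty U]
    (𝒞 𝒦 ℋ : Finset (Finset U)) (hdom : IslandDomain 𝒞 𝒦)
    (hsub : ℋ ⊆ 𝒞) (hne : (∅ : Finset U) ∉ ℋ) (hdist : DistantFamily 𝒦 ℋ) :
    CDWIndependent ℋ ∧ (Finset.univ ∈ ℋ → Admissible 𝒞 𝒦 ℋ) := by
  classical
  have hKmem : ∀ A ∈ ℋ, A ∈ 𝒦 := fun A hA => hdom.1 (hsub hA)
  have hcd : CDIndependent ℋ := by
    intro A hA B hB
    by_contra hc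
    push_neg at hc
    obtain ⟨h1, h2, h3⟩ := hc
    exact (hdist A hA B hB h1 h2).1
      ⟨A, hKmem A hA, Or.inl rfl, h3⟩
  have hw : WeaklyIndependent ℋ := by
    intro H hH 𝒢 h𝒢 h𝒢ne hHsub
    by_contra hc
    push_neg at hc
    have hHne : H.Nonempty := Finset.nonempty_iff_ne_empty.2 (fun h => hne (h ▸ hH))
    have hsubH : ∀ G ∈ 𝒢, (G ∩ H).Nonempty → G ⊆ H := by
      intro G hG hGH
      by_contra hGnH
      exact (hdist G (h𝒢 hG) H hH hGnH (hc G hG)).1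
        ⟨G, hKmem G (h𝒢 hG), Or.inl rfl, hGH⟩
    obtain ⟨x, hx⟩ := hHne
    obtain ⟨G0, hG0, hxG0⟩ := Finset.mem_sup.1 (hHsub hx)
    have hG0H : G0 ⊆ H := hsubH G0 hG0 ⟨x, Finset.mem_inter.2 ⟨hxG0, hx⟩⟩
    obtain ⟨G1, hG1, hmax⟩ : ∃ G1 ∈ 𝒢.filter fun G => G ⊆ H,
        ∀ x ∈ 𝒢.filter fun G => G ⊆ H, ¬G1 < x := by
      obtain ⟨G1, hG1⟩ := Finset.exists_maximal
        (s := 𝒢.filter fun G => G ⊆ H) ⟨G0, by simp [hG0, hG0H]⟩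
      exact ⟨G1, hG1.1, fun x hx hlt => hlt.not_ge (hG1.2 hx hlt.le)⟩
    simp only [Finset.mem_filter] at hG1
    have hG1H : G1 ⊂ H := Finset.ssubset_def.2 ⟨hG1.2, hc G1 hG1.1⟩
    obtain ⟨K, hKm, hKcov, hKH⟩ :=
      cover_exists_aux 𝒦 G1 H H (hKmem H hH) hG1H (subset_refl H)
    obtain ⟨y, hy⟩ := Finset.exists_of_ssubset hKcov.1
    have hyH : y ∈ H := hKH hy.1
    obtain ⟨G2, hG2, hyG2⟩ := Finset.mem_sup.1 (hHsub hyH)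
    have hG2H : G2 ⊆ H := hsubH G2 hG2 ⟨y, Finset.mem_inter.2 ⟨hyG2, hyH⟩⟩
    have h12 : ¬G1 ⊆ G2 := fun hs =>
      hmax G2 (Finset.mem_filter.2 ⟨hG2, hG2H⟩)
        (Finset.ssubset_def.2 ⟨hs, fun h21 => hy.2 (h21 hyG2)⟩)
    have h21 : ¬G2 ⊆ G1 := fun h => hy.2 (h hyG2)
    exact (hdist G1 (h𝒢 hG1.1) G2 (h𝒢 hG2) h12 h21).1
      ⟨K, hKm, Or.inr hKcov, ⟨y, Finset.mem_inter.2 ⟨hy.1, hyG2⟩⟩⟩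
  refine ⟨⟨hcd, hw⟩, fun huniv => ⟨hsub, hne, huniv, ?_⟩⟩
  intro 𝒜 h𝒜 h𝒜ne hanti
  obtain ⟨H0, hH0⟩ := h𝒜ne
  refine ⟨H0, hH0, fun K hKm hHK hKS => ?_⟩
  obtain ⟨K1, hK1m, hK1cov, hK1S⟩ := cover_exists_aux 𝒦 H0 (𝒜.sup id) K hKm hHK hKS
  obtain ⟨y, hy⟩ := Finset.exists_of_ssubset hK1cov.1
  obtain ⟨B, hB, hyB⟩ := Finset.mem_sup.1 (hK1S hy.1)
  have hnHB : ¬H0 ⊆ B := fun h => hy.2 (by rw [hanti H0 hH0 B hB h]; exact hyB)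
  have hnBH : ¬B ⊆ H0 := fun h => hy.2 (h hyB)
  exact (hdist H0 (h𝒜 hH0) B (h𝒜 hB) hnHB hnBH).1
    ⟨K1, hK1m, Or.inr hK1cov, ⟨y, Finset.mem_inter.2 ⟨hy.1, hyB⟩⟩⟩
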